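/- Let M be a continuous local martingale with M(0)=0 and DDS Brownian motion W, M(t) = W(⟨M⟩_t). Let B_m be the Skorohod-embedded walks of W and N_m(t) the discrete quadratic variation of M with step 2^{−m}. Then for every K > 0, sup_{0 ≤ t ≤ K} | M(t) − B_m(N_m(t)) | → 0 almost surely as m → ∞. -/

import Mathlib

open scoped Classical ENNReal NNReal
open MeasureTheory ProbabilityTheory Filter Set

noncomputable section

/-- `W` is a standard Brownian motion on `(Ω, P)`: starts at `0`, has continuous
paths, Gaussian increments `W_t - W_s ~ N(0, t-s)`, and independent increments. -/
def IsStandardBM {Ω : Type} [MeasurableSpace Ω] (P : Measure Ω) (W : ℝ → Ω → ℝ) : Prop :=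
  (∀ t : ℝ, StronglyMeasurable (W t)) ∧
  (∀ ω, W 0 ω = 0) ∧
  (∀ ω, Continuous fun t => W t ω) ∧
  (∀ s t : ℝ, 0 ≤ s → s ≤ t →
    P.map (fun ω => W t ω - W s ω) = gaussianReal 0 (Real.toNNReal (t - s))) ∧
  (∀ n : ℕ, ∀ u : ℕ → ℝ, Monotone u → u 0 = 0 → (∀ i, 0 ≤ u i) →
    iIndepFun
      (fun i ω => W (u (i + 1)) ω - W (u i) ω) P)

/-- Pathwise Skorohod stopping times with step `2^{-m}`:
`s_m(0)=0`, `s_m(k+1) = inf{s > s_m(k) : |W(s) - W(s_m(k))| = 2^{-m}}`. -/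
def skTime (Wp : ℝ → ℝ) (m : ℕ) : ℕ → ℝ
  | 0 => 0
  | k + 1 => sInf {s : ℝ | skTime Wp m k < s ∧
      |Wp s - Wp (skTime Wp m k)| = (2 : ℝ) ^ (-(m : ℤ))}

/-- The Skorohod-embedded walk `B_m`, with `B_m(k 2^{-2m}) = W(s_m(k))`, extended
to real `t ≥ 0` by linear interpolation. -/
def embWalk (Wp : ℝ → ℝ) (m : ℕ) (t : ℝ) : ℝ :=
  (1 - (t * 2 ^ (2 * m) - (⌊t * 2 ^ (2 * m)⌋₊ : ℝ))) * Wp (skTime Wp m ⌊t * 2 ^ (2 * m)⌋₊) +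
    (t * 2 ^ (2 * m) - (⌊t * 2 ^ (2 * m)⌋₊ : ℝ)) * Wp (skTime Wp m (⌊t * 2 ^ (2 * m)⌋₊ + 1))

/-- Pathwise Itô sum `(f(W)·W)^m_t`. -/
def itoSum (Wp : ℝ → ℝ) (f : ℝ → ℝ) (m : ℕ) (t : ℝ) : ℝ :=
  ∑ r ∈ Finset.range ⌊t * 2 ^ (2 * m)⌋₊,
    f (Wp (skTime Wp m r)) * (Wp (skTime Wp m (r + 1)) - Wp (skTime Wp m r))

/-- Pathwise Stratonovich sum `(f(W)∘W)^m_t`. -/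
def stratSum (Wp : ℝ → ℝ) (f : ℝ → ℝ) (m : ℕ) (t : ℝ) : ℝ :=
  ∑ r ∈ Finset.range ⌊t * 2 ^ (2 * m)⌋₊,
    (f (Wp (skTime Wp m r)) + f (Wp (skTime Wp m (r + 1)))) / 2 *
      (Wp (skTime Wp m (r + 1)) - Wp (skTime Wp m r))

/-- Discrete quadratic variation `N_m(t) = 2^{-2m}·#{r > 0 : τ_m(r) ≤ t}` of a path. -/
def discQV (Mp : ℝ → ℝ) (m : ℕ) (t : ℝ) : ℝ :=
  (2 : ℝ) ^ (-(2 * m : ℤ)) * (Set.ncard {r : ℕ | 0 < r ∧ skTime Mp m r ≤ t} : ℝ)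

/-! ### Auxiliary deterministic lemmas -/

lemma eps_pos (m : ℕ) : (0:ℝ) < 2 ^ (-(m:ℤ)) := zpow_pos (by norm_num) _

lemma skTime_zero (Wp : ℝ → ℝ) (m : ℕ) : skTime Wp m 0 = 0 := rfl

lemma skTime_succ_def (Wp : ℝ → ℝ) (m k : ℕ) :
    skTime Wp m (k + 1) = sInf {s : ℝ | skTime Wp m k < s ∧
      |Wp s - Wp (skTime Wp m k)| = (2 : ℝ) ^ (-(m : ℤ))} := rfl

/-- The hitting lemma: if `Wp` is continuous and unbounded, then from any `a ≥ 0`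
there is a first time `t > a` with `|Wp t - Wp a| = 2^{-m}`, and before `t` the
oscillation is strictly smaller. -/
lemma hit_exists {Wp : ℝ → ℝ} (m : ℕ) (hWc : Continuous Wp)
    (hub : ∀ C : ℝ, ∃ n : ℕ, C < |Wp n|) (a : ℝ) (ha : 0 ≤ a) :
    ∃ t : ℝ, IsLeast {s : ℝ | a < s ∧ |Wp s - Wp a| = (2:ℝ) ^ (-(m:ℤ))} t ∧
      ∀ s, a ≤ s → s < t → |Wp s - Wp a| < (2:ℝ) ^ (-(m:ℤ)) := by
  set ε : ℝ := (2:ℝ) ^ (-(m:ℤ)) with hεdef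
  have hε : 0 < ε := eps_pos m
  set S : Set ℝ := {s : ℝ | a < s ∧ |Wp s - Wp a| = ε} with hSdef
  have gcont : Continuous fun s => |Wp s - Wp a| := (hWc.sub continuous_const).abs
  -- a bound for |Wp| on [0, a]
  obtain ⟨C, hC⟩ := (isCompact_Icc (a := (0:ℝ)) (b := a)).exists_bound_of_continuousOn
    hWc.continuousOn
  obtain ⟨n, hn⟩ := hub (max C (|Wp a| + ε))
  have hna : a < (n:ℝ) := by
    by_contra h
    push_neg at h
    have : |Wp n| ≤ C := by
      simpa using hC n ⟨Nat.cast_nonneg n, h⟩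
    exact absurd hn (not_lt.2 (this.trans (le_max_left _ _)))
  have hgn : ε ≤ |Wp (n:ℝ) - Wp a| := by
    have h1 : |Wp a| + ε < |Wp (n:ℝ)| := lt_of_le_of_lt (le_max_right _ _) hn
    have := abs_sub_abs_le_abs_sub (Wp (n:ℝ)) (Wp a)
    linarith
  -- S is nonempty via IVT
  have hSne : S.Nonempty := by
    have h0 : |Wp a - Wp a| = 0 := by simp
    have hivt := intermediate_value_Icc hna.le gcont.continuousOn
    have hmem : ε ∈ Icc (|Wp a - Wp a|) (|Wp (n:ℝ) - Wp a|) := ⟨by rw [h0]; exact hε.le, hgn⟩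
    obtain ⟨s₀, hs₀I, hs₀⟩ := hivt hmem
    change |Wp s₀ - Wp a| = ε at hs₀
    refine ⟨s₀, lt_of_le_of_ne hs₀I.1 ?_, hs₀⟩
    intro h
    rw [← h, h0] at hs₀
    exact hε.ne' hs₀.symm
  have hSbdd : BddBelow S := ⟨a, fun s hs => hs.1.le⟩
  set t := sInf S with htdef
  have htcl : t ∈ closure S := csInf_mem_closure hSne hSbdd
  have hScl : closure S ⊆ {s : ℝ | a ≤ s ∧ |Wp s - Wp a| = ε} := by
    apply closure_minimal
    · intro s hs; exact ⟨hs.1.le, hs.2⟩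
    · exact (isClosed_le continuous_const continuous_id).inter
        (isClosed_eq gcont continuous_const)
  have ht' := hScl htcl
  have hta : a < t := by
    rcases lt_or_eq_of_le ht'.1 with h | h
    · exact h
    · exfalso
      have := ht'.2
      rw [← h] at this
      simp at this
      exact hε.ne' (by simpa using this.symm)
  have htS : t ∈ S := ⟨hta, ht'.2⟩
  refine ⟨t, ⟨htS, fun s hs => csInf_le hSbdd hs⟩, ?_⟩
  intro s has hst
  rcases eq_or_lt_of_le has with h | h
  · rw [← h]; simpa using hε
  · by_contra hcon
    push_neg at hcon
    have hivt := intermediate_value_Icc has gcont.continuousOn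
    have hmem : ε ∈ Icc (|Wp a - Wp a|) (|Wp s - Wp a|) := ⟨by simp [hε.le], hcon⟩
    obtain ⟨s', hs'I, hs'⟩ := hivt hmem
    change |Wp s' - Wp a| = ε at hs'
    have hs'a : a < s' := by
      rcases lt_or_eq_of_le hs'I.1 with h' | h'
      · exact h'
      · exfalso
        rw [← h'] at hs'
        simp at hs'
        exact hε.ne' (by simpa using hs'.symm)
    have : t ≤ s' := csInf_le hSbdd ⟨hs'a, hs'⟩
    exact absurd (lt_of_le_of_lt hs'I.2 hst) (not_lt.2 this)

lemma sk_nonneg {Wp : ℝ → ℝ} (m : ℕ) (hWc : Continuous Wp)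
    (hub : ∀ C : ℝ, ∃ n : ℕ, C < |Wp n|) : ∀ k, 0 ≤ skTime Wp m k := by
  intro k
  induction k with
  | zero => exact le_refl 0
  | succ k ih =>
      obtain ⟨t, htL, -⟩ := hit_exists m hWc hub (skTime Wp m k) ih
      rw [skTime_succ_def, htL.csInf_eq]
      exact ih.trans htL.1.1.le

lemma sk_succ_spec {Wp : ℝ → ℝ} (m : ℕ) (hWc : Continuous Wp)
    (hub : ∀ C : ℝ, ∃ n : ℕ, C < |Wp n|) (k : ℕ) :
    skTime Wp m k < skTime Wp m (k+1) ∧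
      |Wp (skTime Wp m (k+1)) - Wp (skTime Wp m k)| = (2:ℝ) ^ (-(m:ℤ)) ∧
      ∀ u, skTime Wp m k ≤ u → u < skTime Wp m (k+1) →
        |Wp u - Wp (skTime Wp m k)| < (2:ℝ) ^ (-(m:ℤ)) := by
  obtain ⟨t, htL, hstr⟩ := hit_exists m hWc hub (skTime Wp m k) (sk_nonneg m hWc hub k)
  have heq : skTime Wp m (k+1) = t := by rw [skTime_succ_def, htL.csInf_eq]
  rw [heq]
  exact ⟨htL.1.1, htL.1.2, hstr⟩

lemma sk_tendsto {Wp : ℝ → ℝ} (m : ℕ) (hWc : Continuous Wp)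
    (hub : ∀ C : ℝ, ∃ n : ℕ, C < |Wp n|) :
    Tendsto (skTime Wp m) atTop atTop := by
  have hmono : Monotone (skTime Wp m) :=
    (strictMono_nat_of_lt_succ (fun k => (sk_succ_spec m hWc hub k).1)).monotone
  rcases tendsto_of_monotone hmono with h | ⟨l, hl⟩
  · exact h
  · exfalso
    have h1 : Tendsto (fun k => Wp (skTime Wp m k)) atTop (nhds (Wp l)) :=
      (hWc.tendsto l).comp hl
    have h2 : Tendsto (fun k => Wp (skTime Wp m (k+1))) atTop (nhds (Wp l)) :=
      h1.comp (tendsto_add_atTop_nat 1)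
    have h3 : Tendsto (fun k => |Wp (skTime Wp m (k+1)) - Wp (skTime Wp m k)|)
        atTop (nhds 0) := by
      have := (h2.sub h1).abs
      simpa using this
    have h4 : Tendsto (fun _ : ℕ => (2:ℝ) ^ (-(m:ℤ))) atTop (nhds 0) := by
      have : (fun k : ℕ => |Wp (skTime Wp m (k+1)) - Wp (skTime Wp m k)|)
          = fun _ : ℕ => (2:ℝ) ^ (-(m:ℤ)) := by
        funext k; exact (sk_succ_spec m hWc hub k).2.1
      rwa [this] at h3
    exact (eps_pos m).ne' (tendsto_nhds_unique tendsto_const_nhds h4)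

section TimeChange

variable {Wp Ap : ℝ → ℝ} {m : ℕ}

/-- Induction step for the time-changed stopping times. -/
lemma tau_step (hWc : Continuous Wp) (hub : ∀ C : ℝ, ∃ n : ℕ, C < |Wp n|)
    (hA : Continuous Ap) (hAm : Monotone Ap) (hAtop : Tendsto Ap atTop atTop) (k : ℕ)
    (h0 : 0 ≤ skTime (fun u => Wp (Ap u)) m k)
    (hAτ : Ap (skTime (fun u => Wp (Ap u)) m k) = skTime Wp m k) :
    skTime (fun u => Wp (Ap u)) m k < skTime (fun u => Wp (Ap u)) m (k+1) ∧
      Ap (skTime (fun u => Wp (Ap u)) m (k+1)) = skTime Wp m (k+1) ∧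
      ∀ t, t < skTime (fun u => Wp (Ap u)) m (k+1) → Ap t < skTime Wp m (k+1) := by
  set τk := skTime (fun u => Wp (Ap u)) m k with hτk
  set sk := skTime Wp m k with hsk
  set sk1 := skTime Wp m (k+1) with hsk1
  have hss := sk_succ_spec m hWc hub k
  rw [← hsk, ← hsk1] at hss
  set T : Set ℝ := {t : ℝ | sk1 ≤ Ap t} with hTdef
  have hTne : T.Nonempty := by
    obtain ⟨t, ht⟩ := (hAtop.eventually_ge_atTop sk1).exists
    exact ⟨t, ht⟩
  have hlb : ∀ t ∈ T, τk ≤ t := by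
    intro t ht
    by_contra h
    push_neg at h
    have : Ap t ≤ sk := hAτ ▸ hAm h.le
    exact absurd (lt_of_le_of_lt ht (lt_of_le_of_lt this hss.1))
      (lt_irrefl _)
  have hTbdd : BddBelow T := ⟨τk, hlb⟩
  have hTcl : IsClosed T := isClosed_le continuous_const hA
  set t' := sInf T with ht'def
  have ht'T : t' ∈ T := hTcl.csInf_mem hTne hTbdd
  have hτt' : τk < t' := by
    rcases lt_or_eq_of_le (hlb t' ht'T) with h | h
    · exact h
    · exfalso
      have : sk1 ≤ sk := by rw [← hAτ, h]; exact ht'T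
      exact absurd hss.1 (not_lt.2 this)
  have hAt' : Ap t' = sk1 := by
    have hmem : sk1 ∈ Icc (Ap τk) (Ap t') := ⟨by rw [hAτ]; exact hss.1.le, ht'T⟩
    obtain ⟨x, hxI, hx⟩ := intermediate_value_Icc hτt'.le hA.continuousOn hmem
    have hxT : x ∈ T := by rw [hTdef]; exact mem_setOf.2 hx.ge
    have : t' ≤ x := csInf_le hTbdd hxT
    have hxt : x = t' := le_antisymm hxI.2 this
    rw [← hxt]; exact hx
  have hbefore : ∀ t, t < t' → Ap t < sk1 := by
    intro t ht
    by_contra h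
    push_neg at h
    exact absurd (csInf_le hTbdd h) (not_le.2 ht)
  -- identify skTime for Mp at k+1 with t'
  have hMτ : Wp (Ap τk) = Wp sk := by rw [hAτ]
  have hleast : IsLeast {s : ℝ | τk < s ∧
      |Wp (Ap s) - Wp (Ap τk)| = (2:ℝ) ^ (-(m:ℤ))} t' := by
    constructor
    · refine ⟨hτt', ?_⟩
      rw [hAt', hMτ]
      exact hss.2.1
    · intro u hu
      by_contra h
      push_neg at h
      have hA1 : sk ≤ Ap u := by rw [← hAτ]; exact hAm hu.1.le
      have hA2 : Ap u < sk1 := hbefore u h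
      have := hss.2.2 (Ap u) hA1 hA2
      rw [hMτ] at hu
      exact this.ne hu.2
  have heq : skTime (fun u => Wp (Ap u)) m (k+1) = t' := by
    rw [skTime_succ_def, ← hτk]
    exact hleast.csInf_eq
  rw [heq]
  exact ⟨hτt', hAt', hbefore⟩

lemma tau_base (hWc : Continuous Wp) (hub : ∀ C : ℝ, ∃ n : ℕ, C < |Wp n|)
    (hA : Continuous Ap) (hAm : Monotone Ap) (hA0 : Ap 0 = 0)
    (hAtop : Tendsto Ap atTop atTop) :
    ∀ k, 0 ≤ skTime (fun u => Wp (Ap u)) m k ∧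
      Ap (skTime (fun u => Wp (Ap u)) m k) = skTime Wp m k := by
  intro k
  induction k with
  | zero => exact ⟨le_refl 0, by rw [skTime_zero, skTime_zero, hA0]⟩
  | succ k ih =>
      obtain ⟨h1, h2, -⟩ := tau_step hWc hub hA hAm hAtop k ih.1 ih.2
      exact ⟨ih.1.trans h1.le, h2⟩

/-- The main deterministic estimate. -/
lemma main_det (hWc : Continuous Wp) (hub : ∀ C : ℝ, ∃ n : ℕ, C < |Wp n|)
    (hA : Continuous Ap) (hAm : Monotone Ap) (hA0 : Ap 0 = 0)
    (hAtop : Tendsto Ap atTop atTop) (m : ℕ) (t : ℝ) (ht : 0 ≤ t) :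
    |Wp (Ap t) - embWalk Wp m (discQV (fun u => Wp (Ap u)) m t)| ≤ (2:ℝ) ^ (-(m:ℤ)) := by
  set τ := skTime (fun u => Wp (Ap u)) m with hτdef
  set s := skTime Wp m with hsdef
  have hbase := tau_base (m := m) hWc hub hA hAm hA0 hAtop
  have hstep := fun k => tau_step (m := m) hWc hub hA hAm hAtop k (hbase k).1 (hbase k).2
  simp only [← hτdef, ← hsdef] at hbase hstep
  have hτmono : StrictMono τ := strictMono_nat_of_lt_succ fun k => (hstep k).1
  -- τ tends to infinity
  have hτtop : Tendsto τ atTop atTop := by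
    rw [tendsto_atTop]
    intro b
    have hsev : ∀ᶠ k in atTop, Ap b < s k :=
      (sk_tendsto m hWc hub).eventually_gt_atTop (Ap b)
    filter_upwards [hsev] with k hk
    by_contra h
    push_neg at h
    have : Ap (τ k) ≤ Ap b := hAm h.le
    rw [(hbase k).2] at this
    exact absurd hk (not_lt.2 this)
  have hex : ∃ j, t < τ j := (hτtop.eventually_gt_atTop t).exists
  set j := Nat.find hex with hjdef
  have hj : t < τ j := Nat.find_spec hex
  have hj0 : j ≠ 0 := by
    intro h
    rw [h] at hj
    have : τ 0 = 0 := rfl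
    rw [this] at hj
    exact absurd ht (not_le.2 hj)
  obtain ⟨k, hk⟩ := Nat.exists_eq_succ_of_ne_zero hj0
  have hτk : τ k ≤ t := by
    have := Nat.find_min hex (m := k) (by omega)
    push_neg at this
    exact this
  have hτk1 : t < τ (k+1) := by rw [hk] at hj; exact hj
  -- the counting set is Icc 1 k
  have hseteq : {r : ℕ | 0 < r ∧ skTime (fun u => Wp (Ap u)) m r ≤ t} = Set.Icc 1 k := by
    ext r
    simp only [mem_setOf_eq, Set.mem_Icc]
    constructor
    · rintro ⟨hr, hrt⟩
      refine ⟨hr, ?_⟩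
      by_contra h
      push_neg at h
      have : τ (k+1) ≤ τ r := hτmono.monotone h
      exact absurd (lt_of_lt_of_le hτk1 (this.trans hrt)) (lt_irrefl _)
    · rintro ⟨hr, hrk⟩
      exact ⟨hr, (hτmono.monotone hrk).trans hτk⟩
  have hncard : ({r : ℕ | 0 < r ∧ skTime (fun u => Wp (Ap u)) m r ≤ t}).ncard = k := by
    rw [hseteq, ← Finset.coe_Icc, Set.ncard_coe_finset, Nat.card_Icc]
    omega
  have hdq : discQV (fun u => Wp (Ap u)) m t = (2:ℝ) ^ (-(2 * m : ℤ)) * k := by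
    rw [discQV, hncard]
  -- the argument of embWalk
  have h2m : ((2:ℝ) ^ (2 * m)) ≠ 0 := by positivity
  have hx : discQV (fun u => Wp (Ap u)) m t * 2 ^ (2 * m) = (k:ℝ) := by
    rw [hdq]
    have : (2:ℝ) ^ (-(2 * m : ℤ)) = ((2:ℝ) ^ (2 * m))⁻¹ := by
      rw [zpow_neg]
      norm_cast
    rw [this]
    field_simp
  have hemb : embWalk Wp m (discQV (fun u => Wp (Ap u)) m t) = Wp (s k) := by
    rw [embWalk, hx, Nat.floor_natCast]
    simp [hsdef]
  rw [hemb]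
  -- the estimate
  have hA1 : s k ≤ Ap t := by rw [← (hbase k).2]; exact hAm hτk
  have hA2 : Ap t < s (k+1) := (hstep k).2.2 t hτk1
  exact ((sk_succ_spec m hWc hub k).2.2 (Ap t) hA1 hA2).le

end TimeChange

/-! ### Almost sure unboundedness of Brownian motion -/

lemma sqrt_tendsto_atTop : Tendsto Real.sqrt atTop atTop := by
  rw [tendsto_atTop]
  intro b
  filter_upwards [eventually_ge_atTop (b^2)] with x hx
  calc b ≤ |b| := le_abs_self b
    _ = Real.sqrt (b^2) := (Real.sqrt_sq_eq_abs b).symm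
    _ ≤ Real.sqrt x := Real.sqrt_le_sqrt hx

lemma ae_unbounded {Ω : Type} [MeasurableSpace Ω] (P : Measure Ω) [IsProbabilityMeasure P]
    (W : ℝ → Ω → ℝ) (hW : IsStandardBM P W) :
    ∀ᵐ ω ∂P, ∀ C : ℝ, ∃ n : ℕ, C < |W n ω| := by
  obtain ⟨hmeas, h0, hcont, hlaw, -⟩ := hW
  have key : ∀ C : ℕ, ∀ᵐ ω ∂P, ∃ n : ℕ, (C:ℝ) < |W n ω| := by
    intro C
    rw [ae_iff]
    have hseteq : {ω | ¬ ∃ n : ℕ, (C:ℝ) < |W n ω|} = {ω | ∀ n : ℕ, |W n ω| ≤ C} := by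
      ext ω; simp [not_lt]
    rw [hseteq]
    -- the law computation at time n+1
    have hmap : ∀ n : ℕ, P {ω | |W ((n+1 : ℕ):ℝ) ω| ≤ C}
        = gaussianReal 0 (((n+1 : ℕ):ℝ)).toNNReal (Icc (-(C:ℝ)) C) := by
      intro n
      set tn : ℝ := ((n+1 : ℕ):ℝ) with htn
      have hfm : Measurable fun ω => W tn ω - W 0 ω :=
        ((hmeas tn).measurable).sub ((hmeas 0).measurable)
      have hpre : (fun ω => W tn ω - W 0 ω) ⁻¹' (Icc (-(C:ℝ)) C)
          = {ω | |W tn ω| ≤ C} := by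
        ext ω
        simp [h0 ω, abs_le, mem_Icc]
      rw [← hpre, ← Measure.map_apply hfm measurableSet_Icc,
        hlaw 0 tn (le_refl 0) (by positivity), sub_zero]
    -- the bound on the gaussian measure of a fixed interval
    have hbound : ∀ v : ℝ≥0, v ≠ 0 → gaussianReal 0 v (Icc (-(C:ℝ)) C)
        ≤ ENNReal.ofReal (2*C) * ENNReal.ofReal ((Real.sqrt (2*Real.pi*v))⁻¹) := by
      intro v hv
      rw [gaussianReal_apply 0 hv]
      have hpdf : ∀ x : ℝ, gaussianPDF 0 v x
          ≤ ENNReal.ofReal ((Real.sqrt (2*Real.pi*v))⁻¹) := by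
        intro x
        rw [gaussianPDF]
        apply ENNReal.ofReal_le_ofReal
        rw [gaussianPDFReal]
        have h1 : Real.exp (-(x - 0)^2 / (2*v)) ≤ 1 := by
          rw [Real.exp_le_one_iff]
          apply div_nonpos_of_nonpos_of_nonneg
          · simp [sq_nonneg]
          · positivity
        calc (Real.sqrt (2*Real.pi*v))⁻¹ * Real.exp (-(x - 0)^2 / (2*v))
            ≤ (Real.sqrt (2*Real.pi*v))⁻¹ * 1 := by
              apply mul_le_mul_of_nonneg_left h1
              positivity
          _ = (Real.sqrt (2*Real.pi*v))⁻¹ := mul_one _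
      calc ∫⁻ x in Icc (-(C:ℝ)) C, gaussianPDF 0 v x
          ≤ ∫⁻ _ in Icc (-(C:ℝ)) C, ENNReal.ofReal ((Real.sqrt (2*Real.pi*v))⁻¹) :=
            lintegral_mono fun x => hpdf x
        _ = ENNReal.ofReal ((Real.sqrt (2*Real.pi*v))⁻¹) * volume (Icc (-(C:ℝ)) C) :=
            setLIntegral_const _ _
        _ ≤ ENNReal.ofReal (2*C) * ENNReal.ofReal ((Real.sqrt (2*Real.pi*v))⁻¹) := by
            rw [Real.volume_Icc]
            have h2C : (C:ℝ) - (-(C:ℝ)) = 2*C := by ring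
            rw [h2C, mul_comm]
    -- monotone bound on the bad set
    have hsub : ∀ n : ℕ, {ω | ∀ k : ℕ, |W k ω| ≤ C} ⊆ {ω | |W ((n+1 : ℕ):ℝ) ω| ≤ C} :=
      fun n ω hω => hω (n+1)
    have hPA : ∀ n : ℕ, P {ω | ∀ k : ℕ, |W k ω| ≤ C}
        ≤ ENNReal.ofReal (2*C) * ENNReal.ofReal ((Real.sqrt (2*Real.pi*((n+1:ℕ):ℝ)))⁻¹) := by
      intro n
      have hv : (((n+1 : ℕ):ℝ)).toNNReal ≠ 0 := by
        simp only [Ne, Real.toNNReal_eq_zero, not_le]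
        positivity
      calc P {ω | ∀ k : ℕ, |W k ω| ≤ C} ≤ P {ω | |W ((n+1 : ℕ):ℝ) ω| ≤ C} :=
            measure_mono (hsub n)
        _ = gaussianReal 0 (((n+1 : ℕ):ℝ)).toNNReal (Icc (-(C:ℝ)) C) := hmap n
        _ ≤ ENNReal.ofReal (2*C) * ENNReal.ofReal
              ((Real.sqrt (2*Real.pi*((((n+1 : ℕ):ℝ)).toNNReal : ℝ)))⁻¹) :=
            hbound _ hv
        _ = ENNReal.ofReal (2*C) * ENNReal.ofReal ((Real.sqrt (2*Real.pi*((n+1:ℕ):ℝ)))⁻¹) := by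
            rw [Real.coe_toNNReal _ (by positivity)]
    -- the bound tends to 0
    have htend : Tendsto (fun n : ℕ => ENNReal.ofReal (2*C) *
        ENNReal.ofReal ((Real.sqrt (2*Real.pi*((n+1:ℕ):ℝ)))⁻¹)) atTop (nhds 0) := by
      have hreal : Tendsto (fun n : ℕ => (Real.sqrt (2*Real.pi*((n+1:ℕ):ℝ)))⁻¹)
          atTop (nhds 0) := by
        apply Filter.Tendsto.comp tendsto_inv_atTop_zero
        apply Filter.Tendsto.comp sqrt_tendsto_atTop
        apply Filter.Tendsto.const_mul_atTop (by positivity : (0:ℝ) < 2*Real.pi)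
        have : Tendsto (fun n : ℕ => ((n:ℝ))) atTop atTop := tendsto_natCast_atTop_atTop
        apply tendsto_atTop_add_const_right _ 1 this |>.congr
        intro n; push_cast; ring
      have h2 := ENNReal.Tendsto.const_mul (a := ENNReal.ofReal (2*C))
        (ENNReal.tendsto_ofReal hreal) (Or.inr ENNReal.ofReal_ne_top)
      simpa using h2
    -- conclude
    exact le_antisymm (ge_of_tendsto' htend hPA) zero_le
  have hall := ae_all_iff.mpr key
  filter_upwards [hall] with ω hω C
  obtain ⟨D, hD⟩ := exists_nat_gt C
  obtain ⟨n, hn⟩ := hω D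
  exact ⟨n, hD.trans hn⟩

/-- The time-changed embedded walks `B_m(N_m(t))` converge a.s. uniformly on
compacts to `M(t)`, where `B_m` is the Skorohod-embedded walk of the DDS Brownian
motion `W` of `M` and `N_m` is the discrete quadratic variation of `M`. -/
theorem embedded_walk_approximates_local_martingale {Ω : Type} [MeasurableSpace Ω]
    (P : Measure Ω) [IsProbabilityMeasure P] (M W : ℝ → Ω → ℝ) (A : ℝ → Ω → ℝ)
    (hW : IsStandardBM P W)
    (hA0 : ∀ ω, A 0 ω = 0) (hAcont : ∀ ω, Continuous fun t => A t ω)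
    (hAmono : ∀ ω, Monotone fun t => A t ω)
    (hAinf : ∀ᵐ ω ∂P, Tendsto (fun t => A t ω) atTop atTop)
    (hDDS : ∀ t ω, M t ω = W (A t ω) ω)
    (K : ℝ) (hK : 0 < K) :
    ∀ᵐ ω ∂P,
      Tendsto (fun m : ℕ => ⨆ t : Set.Icc (0 : ℝ) K,
          |M (t : ℝ) ω - embWalk (fun u => W u ω) m (discQV (fun u => M u ω) m (t : ℝ))|)
        atTop (nhds 0) := by
  filter_upwards [ae_unbounded P W hW, hAinf] with ω hub hAt
  have hMp : (fun u => M u ω) = fun u => W (A u ω) ω := funext fun u => hDDS u ω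
  have hWc : Continuous fun u => W u ω := hW.2.2.1 ω
  haveI : Nonempty (Set.Icc (0:ℝ) K) := ⟨⟨0, le_refl 0, hK.le⟩⟩
  have hbd : ∀ m : ℕ, (⨆ t : Set.Icc (0 : ℝ) K,
      |M (t : ℝ) ω - embWalk (fun u => W u ω) m (discQV (fun u => M u ω) m (t : ℝ))|)
      ≤ (2:ℝ) ^ (-(m:ℤ)) := by
    intro m
    apply ciSup_le
    intro t
    rw [hMp, hDDS]
    exact main_det hWc hub (hAcont ω) (hAmono ω) (hA0 ω) hAt m (t : ℝ) t.2.1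
  have hnn : ∀ m : ℕ, 0 ≤ (⨆ t : Set.Icc (0 : ℝ) K,
      |M (t : ℝ) ω - embWalk (fun u => W u ω) m (discQV (fun u => M u ω) m (t : ℝ))|) := by
    intro m
    exact Real.iSup_nonneg fun t => abs_nonneg _
  have htend : Tendsto (fun m : ℕ => (2:ℝ) ^ (-(m:ℤ))) atTop (nhds 0) := by
    have heq : (fun m : ℕ => (2:ℝ) ^ (-(m:ℤ))) = fun m : ℕ => ((2:ℝ)⁻¹) ^ m := by
      funext m
      rw [zpow_neg, inv_pow, zpow_natCast]
    rw [heq]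
    exact tendsto_pow_atTop_nhds_zero_of_lt_one (by norm_num) (by norm_num)
  exact squeeze_zero hnn hbd htend
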